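/- arXiv:2007.13948 — 4 statements merged into one kernel-verified Lean document; each statement's English description precedes it below -/
import Mathlib

section
/- Kalman controllability decomposition: Let n, m be positive integers, A a real n×n matrix and B a real n×m matrix. Let k be the dimension of the controllable subspace 𝔯. Then there exist an invertible real n×n matrix P with Pᵀ = P⁻¹, matrices A₁ ∈ ℝ^{k×k}, A₂ ∈ ℝ^{k×(n−k)}, A₃ ∈ ℝ^{(n−k)×(n−k)} and B₁ ∈ ℝ^{k×m} such that: (1) P⁻¹𝔯 = ℝ^k × {0} (i.e. the image of 𝔯 under multiplication by P⁻¹ is the subspace of vectors whose last n−k coordinates vanish); (2) P⁻¹AP is the 2×2 block matrix with blocks A₁, A₂ in the first row and 0, A₃ in the second row; (3) P⁻¹B equals the block column (B₁; 0); and (4) rank(B₁, A₁B₁, …, A₁^{k−1}B₁) = k. (When k = n the blocks A₂, A₃ are absent.) -/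
open Matrix

/-- The Kalman matrix `(B, AB, …, A^{r-1}B)` of size `n × (r·m)`,
indexed by `Fin n × (Fin r × Fin m)`. -/
noncomputable def kalmanMatrix {n m : ℕ} (A : Matrix (Fin n) (Fin n) ℝ)
    (B : Matrix (Fin n) (Fin m) ℝ) (r : ℕ) : Matrix (Fin n) (Fin r × Fin m) ℝ :=
  Matrix.of fun i jl => (A ^ (jl.1 : ℕ) * B) i jl.2

section Aux

variable {n m : ℕ} (A : Matrix (Fin n) (Fin n) ℝ) (B : Matrix (Fin n) (Fin m) ℝ)

/-- The controllable subspace generated by `r` powers. -/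
noncomputable def kalSpace (r : ℕ) : Submodule ℝ (Fin n → ℝ) :=
  LinearMap.range (kalmanMatrix A B r).mulVecLin

lemma kalman_mulVec (r : ℕ) (w : Fin r × Fin m → ℝ) :
    (kalmanMatrix A B r).mulVec w = ∑ j : Fin r, (A ^ (j : ℕ) * B).mulVec (fun l => w (j, l)) := by
  ext i
  simp only [mulVec, dotProduct, Finset.sum_apply, kalmanMatrix, Matrix.of_apply,
    Fintype.sum_prod_type]

lemma sum_mulVec_mem (r : ℕ) (v : Fin r → Fin m → ℝ) :
    ∑ j : Fin r, (A ^ (j : ℕ) * B).mulVec (v j) ∈ kalSpace A B r :=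
  ⟨fun p => v p.1 p.2, by rw [mulVecLin_apply, kalman_mulVec]⟩

lemma single_pow_mem (r : ℕ) (j : Fin r) (u : Fin m → ℝ) :
    (A ^ (j : ℕ) * B).mulVec u ∈ kalSpace A B r := by
  classical
  have h : (A ^ (j : ℕ) * B).mulVec u
      = ∑ j' : Fin r, (A ^ (j' : ℕ) * B).mulVec (fun l => if j' = j then u l else 0) := by
    rw [Finset.sum_eq_single j]
    · simp
    · intro b _ hb
      simp [hb]
      ext i; simp [mulVec, dotProduct]
    · simp
  rw [h]
  exact sum_mulVec_mem A B r _

lemma pow_mulVec_mem (j : ℕ) (u : Fin m → ℝ) : (A ^ j * B).mulVec u ∈ kalSpace A B n := by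
  rcases Nat.eq_zero_or_pos n with hn | hn
  · subst hn
    have h : (A ^ j * B).mulVec u = 0 := by ext i; exact absurd i.2 (by omega)
    rw [h]; exact Submodule.zero_mem _
  induction j using Nat.strong_induction_on with
  | _ j ih =>
    rcases lt_or_ge j n with hj | hj
    · exact single_pow_mem A B n ⟨j, hj⟩ u
    · set q : Polynomial ℝ := Polynomial.X ^ n - A.charpoly with hq
      have hdeg : q.natDegree < n := by
        rcases eq_or_ne q 0 with h | h
        · rw [h]; simpa using hn
        · rw [Polynomial.natDegree_lt_iff_degree_lt h, hq]
          have h2 : (Polynomial.X ^ n - A.charpoly).degree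
              < (Polynomial.X ^ n : Polynomial ℝ).degree := by
            apply Polynomial.degree_sub_lt
            · rw [Polynomial.degree_X_pow, A.charpoly_degree_eq_dim]; simp
            · exact pow_ne_zero _ Polynomial.X_ne_zero
            · simp [Polynomial.Monic.leadingCoeff A.charpoly_monic]
          simpa using h2
      have hAn : A ^ n = Polynomial.aeval A q := by
        have h0 : Polynomial.aeval A A.charpoly = 0 := A.aeval_self_charpoly
        rw [hq]; simp [h0]
      have hsum : A ^ n = ∑ i ∈ Finset.range n, q.coeff i • A ^ i := by
        rw [hAn, Polynomial.aeval_eq_sum_range' hdeg]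
      have hAj : A ^ j * B = ∑ i ∈ Finset.range n, q.coeff i • (A ^ (j - n + i) * B) := by
        have h3 : A ^ j = A ^ (j - n) * A ^ n := by
          rw [← pow_add]; congr 1; omega
        rw [h3, hsum]
        simp only [Matrix.mul_sum, Matrix.sum_mul]
        refine Finset.sum_congr rfl fun i hi => ?_
        rw [Matrix.mul_smul, Matrix.smul_mul, ← pow_add]
      rw [hAj]
      have h4 : (∑ i ∈ Finset.range n, q.coeff i • (A ^ (j - n + i) * B)).mulVec u
          = ∑ i ∈ Finset.range n, q.coeff i • ((A ^ (j - n + i) * B)).mulVec u := by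
        ext x
        simp [mulVec, dotProduct, Finset.sum_apply, Finset.sum_mul, Finset.mul_sum,
          Matrix.sum_apply, mul_assoc]
        rw [Finset.sum_comm]
      rw [h4]
      refine Submodule.sum_mem _ fun i hi => Submodule.smul_mem _ _ ?_
      exact ih (j - n + i) (by simp at hi; omega)

lemma kalSpace_le_size (r : ℕ) : kalSpace A B r ≤ kalSpace A B n := by
  rintro x ⟨w, rfl⟩
  rw [mulVecLin_apply, kalman_mulVec]
  exact Submodule.sum_mem _ fun j _ => pow_mulVec_mem A B _ _

lemma kalSpace_mono {r r' : ℕ} (h : r ≤ r') : kalSpace A B r ≤ kalSpace A B r' := by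
  rintro x ⟨w, rfl⟩
  rw [mulVecLin_apply, kalman_mulVec]
  refine Submodule.sum_mem _ fun j _ => ?_
  exact single_pow_mem A B r' (Fin.castLE h j) _

lemma mulVec_mem_kalSpace {x : Fin n → ℝ} (hx : x ∈ kalSpace A B n) :
    A.mulVec x ∈ kalSpace A B n := by
  obtain ⟨w, rfl⟩ := hx
  rw [mulVecLin_apply, kalman_mulVec]
  rw [show (A *ᵥ ∑ j : Fin n, (A ^ (j : ℕ) * B) *ᵥ fun l => w (j, l))
      = ∑ j : Fin n, A *ᵥ ((A ^ (j : ℕ) * B) *ᵥ fun l => w (j, l)) from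
    map_sum A.mulVecLin _ _]
  refine Submodule.sum_mem _ fun j _ => ?_
  rw [Matrix.mulVec_mulVec, ← Matrix.mul_assoc, ← pow_succ']
  exact pow_mulVec_mem A B _ _

end Aux

lemma aux_rank_fromRows_zero {α β γ : Type*} [Fintype α] [Fintype β] [Fintype γ]
    (M : Matrix α γ ℝ) : (fromRows M (0 : Matrix β γ ℝ)).rank = M.rank := by
  classical
  let J : (α → ℝ) →ₗ[ℝ] (α ⊕ β → ℝ) :=
    { toFun := fun x => Sum.elim x 0
      map_add' := by intros x y; ext (i | i) <;> simp
      map_smul' := by intros c x; ext (i | i) <;> simp }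
  have hJ : Function.Injective J := by
    intro x y h
    ext i
    exact congr_fun h (Sum.inl i)
  have hrange : LinearMap.range (fromRows M (0 : Matrix β γ ℝ)).mulVecLin
      = Submodule.map J (LinearMap.range M.mulVecLin) := by
    ext y
    constructor
    · rintro ⟨v, rfl⟩
      exact ⟨M.mulVec v, ⟨v, rfl⟩, by simp [mulVecLin_apply, fromRows_mulVec, J]⟩
    · rintro ⟨x, ⟨v, rfl⟩, rfl⟩
      exact ⟨v, by simp [mulVecLin_apply, fromRows_mulVec, J]⟩
  rw [Matrix.rank, Matrix.rank, hrange]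
  exact ((Submodule.equivMapOfInjective J hJ _).symm).finrank_eq

lemma aux_rank_submatrix_rows {α β γ : Type*} [Fintype α] [Fintype β] [Fintype γ]
    [DecidableEq β] (M : Matrix α β ℝ) (e : γ ≃ α) :
    (M.submatrix e id).rank = M.rank := by
  have hrange : LinearMap.range (M.submatrix ⇑e id).mulVecLin
      = Submodule.map ((LinearEquiv.funCongrLeft ℝ ℝ e : (α → ℝ) ≃ₗ[ℝ] (γ → ℝ)) :
          (α → ℝ) →ₗ[ℝ] (γ → ℝ)) (LinearMap.range M.mulVecLin) := by
    ext y
    constructor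
    · rintro ⟨v, rfl⟩
      refine ⟨M.mulVec v, ⟨v, rfl⟩, ?_⟩
      ext i
      simp [mulVecLin_apply, Matrix.submatrix_apply, Matrix.mulVec, dotProduct,
        LinearEquiv.funCongrLeft_apply, LinearMap.funLeft_apply]
    · rintro ⟨x, ⟨v, rfl⟩, rfl⟩
      refine ⟨v, ?_⟩
      ext i
      simp [mulVecLin_apply, Matrix.submatrix_apply, Matrix.mulVec, dotProduct,
        LinearEquiv.funCongrLeft_apply, LinearMap.funLeft_apply]
  rw [Matrix.rank, Matrix.rank, hrange]
  exact (LinearEquiv.finrank_map_eq _ _)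

section OB

variable {n k : ℕ} (hkn : k ≤ n) (W : Submodule ℝ (EuclideanSpace ℝ (Fin n)))
  (hfr : Module.finrank ℝ W = k)

noncomputable def obasis : Fin n → EuclideanSpace ℝ (Fin n) :=
  fun i => Sum.elim
    (fun a => ((stdOrthonormalBasis ℝ W).reindex (finCongr hfr) a : EuclideanSpace ℝ (Fin n)))
    (fun b => ((stdOrthonormalBasis ℝ Wᗮ).reindex (finCongr (by
      have h1 := W.finrank_add_finrank_orthogonal
      rw [finrank_euclideanSpace_fin, hfr] at h1
      omega)) b : EuclideanSpace ℝ (Fin n)))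
    ((finSumFinEquiv.trans (finCongr (Nat.add_sub_cancel' hkn))).symm i)

lemma obasis_orthonormal : Orthonormal ℝ (obasis hkn W hfr) := by
  apply Orthonormal.comp
  · rw [orthonormal_iff_ite]
    rintro (a | a) (b | b)
    · simp only [Sum.elim_inl]
      rw [← Submodule.coe_inner,
        orthonormal_iff_ite.mp (OrthonormalBasis.orthonormal _) a b]
      simp
    · simp only [Sum.elim_inl, Sum.elim_inr]
      rw [Submodule.inner_right_of_mem_orthogonal (SetLike.coe_mem _) (SetLike.coe_mem _)]
      simp
    · simp only [Sum.elim_inl, Sum.elim_inr]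
      rw [Submodule.inner_left_of_mem_orthogonal (SetLike.coe_mem _) (SetLike.coe_mem _)]
      simp
    · simp only [Sum.elim_inr]
      rw [← Submodule.coe_inner,
        orthonormal_iff_ite.mp (OrthonormalBasis.orthonormal _) a b]
      simp
  · exact (finSumFinEquiv.trans (finCongr (Nat.add_sub_cancel' hkn))).symm.injective

lemma obasis_dot (i j : Fin n) :
    ∑ s, obasis hkn W hfr i s * obasis hkn W hfr j s = if i = j then 1 else 0 := by
  have h := orthonormal_iff_ite.mp (obasis_orthonormal hkn W hfr) i j
  rw [PiLp.inner_apply] at h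
  simpa [Real.inner_apply, mul_comm] using h

lemma obasis_mem_left (i : Fin n) (hi : (i : ℕ) < k) : obasis hkn W hfr i ∈ W := by
  unfold obasis
  rcases h : (finSumFinEquiv.trans (finCongr (Nat.add_sub_cancel' hkn))).symm i with a | b
  · exact SetLike.coe_mem _
  · exfalso
    have h5 : i = (finSumFinEquiv.trans (finCongr (Nat.add_sub_cancel' hkn))) (Sum.inr b) := by
      rw [← h]; simp
    have hval : (i : ℕ) = k + (b : ℕ) := by
      rw [h5]; simp [finSumFinEquiv]
    omega

lemma obasis_mem_right (i : Fin n) (hi : k ≤ (i : ℕ)) : obasis hkn W hfr i ∈ Wᗮ := by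
  unfold obasis
  rcases h : (finSumFinEquiv.trans (finCongr (Nat.add_sub_cancel' hkn))).symm i with a | b
  · exfalso
    have h5 : i = (finSumFinEquiv.trans (finCongr (Nat.add_sub_cancel' hkn))) (Sum.inl a) := by
      rw [← h]; simp
    have hval : (i : ℕ) = (a : ℕ) := by
      rw [h5]; simp [finSumFinEquiv]
    omega
  · exact SetLike.coe_mem _

end OB

set_option maxHeartbeats 1000000 in
/-- **Kalman controllability decomposition.** -/
theorem kalman_controllability_decomposition
    (n m : ℕ) (hn : 0 < n) (hm : 0 < m)
    (A : Matrix (Fin n) (Fin n) ℝ) (B : Matrix (Fin n) (Fin m) ℝ)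
    (R : Set (Fin n → ℝ))
    (hR : R = {x : Fin n → ℝ | ∃ v : Fin n → (Fin m → ℝ),
      x = ∑ j : Fin n, (A ^ (j : ℕ) * B).mulVec (v j)})
    (k : ℕ) (hk : k = Module.finrank ℝ (Submodule.span ℝ R)) :
    ∃ (hkn : k ≤ n) (P : Matrix (Fin n) (Fin n) ℝ),
      IsUnit P ∧ Pᵀ = P⁻¹ ∧
      ∃ (A₁ : Matrix (Fin k) (Fin k) ℝ) (A₂ : Matrix (Fin k) (Fin (n - k)) ℝ)
        (A₃ : Matrix (Fin (n - k)) (Fin (n - k)) ℝ) (B₁ : Matrix (Fin k) (Fin m) ℝ),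
        -- (1)  P⁻¹ 𝔯 = ℝ^k × {0}
        (fun x : Fin n → ℝ => P⁻¹.mulVec x) '' R
            = {x : Fin n → ℝ | ∀ i : Fin n, k ≤ (i : ℕ) → x i = 0} ∧
        -- (2)  P⁻¹ A P is block upper triangular with blocks A₁, A₂, 0, A₃
        (P⁻¹ * A * P).submatrix (finSumFinEquiv.trans (finCongr (Nat.add_sub_cancel' hkn)))
            (finSumFinEquiv.trans (finCongr (Nat.add_sub_cancel' hkn)))
          = Matrix.fromBlocks A₁ A₂ 0 A₃ ∧
        -- (3)  P⁻¹ B = (B₁; 0)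
        (P⁻¹ * B).submatrix (finSumFinEquiv.trans (finCongr (Nat.add_sub_cancel' hkn))) id
          = Matrix.fromRows B₁ 0 ∧
        -- (4)  rank (B₁, A₁B₁, …, A₁^{k-1}B₁) = k
        (kalmanMatrix A₁ B₁ k).rank = k := by
  classical
  -- the controllable subspace
  have hRW : R = ↑(kalSpace A B n) := by
    rw [hR]
    ext x
    constructor
    · rintro ⟨v, rfl⟩
      exact sum_mulVec_mem A B n v
    · rintro ⟨w, rfl⟩
      exact ⟨fun j l => w (j, l), by rw [mulVecLin_apply, kalman_mulVec]⟩
  have hspan : Submodule.span ℝ R = kalSpace A B n := by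
    rw [hRW]
    exact Submodule.span_eq _
  set W : Submodule ℝ (EuclideanSpace ℝ (Fin n)) :=
    (kalSpace A B n).comap (WithLp.linearEquiv 2 ℝ (Fin n → ℝ)).toLinearMap with hW
  have hfr : Module.finrank ℝ W = k := by
    have h0 := LinearEquiv.finrank_map_eq (WithLp.linearEquiv 2 ℝ (Fin n → ℝ)).symm (kalSpace A B n)
    rw [Submodule.map_equiv_eq_comap_symm, LinearEquiv.symm_symm] at h0
    rw [hk, hspan]; exact h0
  have hkn : k ≤ n := by
    rw [← hfr]
    have h := W.finrank_le
    rwa [finrank_euclideanSpace_fin] at h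
  set f : Fin n → EuclideanSpace ℝ (Fin n) := obasis hkn W hfr with hf
  set P : Matrix (Fin n) (Fin n) ℝ := Matrix.of fun i j => f j i with hP
  have hPTP : Pᵀ * P = 1 := by
    ext a b
    have h := obasis_dot hkn W hfr a b
    simpa [hP, Matrix.mul_apply, Matrix.one_apply, hf] using h
  have hPinv : P⁻¹ = Pᵀ := Matrix.inv_eq_left_inv hPTP
  have hPPT : P * Pᵀ = 1 := mul_eq_one_comm.mp hPTP
  have hdot : ∀ (x : Fin n → ℝ) (i : Fin n), (Pᵀ *ᵥ x) i = ∑ s, f i s * x s := by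
    intro x i
    simp [hP, mulVec, dotProduct]
  have horth : ∀ x ∈ kalSpace A B n, ∀ i : Fin n, k ≤ (i : ℕ) → ∑ s, f i s * x s = 0 := by
    intro x hx i hi
    have h := Submodule.inner_left_of_mem_orthogonal (K := W) (u := WithLp.toLp 2 x) hx
      (obasis_mem_right hkn W hfr i hi)
    rw [PiLp.inner_apply] at h
    simpa [Real.inner_apply, mul_comm] using h
  refine ⟨hkn, P, IsUnit.of_mul_eq_one_right Pᵀ hPTP, hPinv.symm, ?_⟩
  set e : Fin k ⊕ Fin (n - k) ≃ Fin n :=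
    finSumFinEquiv.trans (finCongr (Nat.add_sub_cancel' hkn)) with he
  have hval_inl : ∀ a : Fin k, ((e (Sum.inl a)) : ℕ) = (a : ℕ) := by
    intro a; simp [he, finSumFinEquiv]
  have hval_inr : ∀ b : Fin (n - k), ((e (Sum.inr b)) : ℕ) = k + (b : ℕ) := by
    intro b; simp [he, finSumFinEquiv]
  set M' : Matrix (Fin k ⊕ Fin (n - k)) (Fin k ⊕ Fin (n - k)) ℝ :=
    (P⁻¹ * A * P).submatrix e e with hM'
  set A₁ := M'.toBlocks₁₁ with hA₁
  set A₂ := M'.toBlocks₁₂ with hA₂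
  set A₃ := M'.toBlocks₂₂ with hA₃
  set B₁ := ((P⁻¹ * B).submatrix e id).toRows₁ with hB₁
  -- entry formulas
  have hentryA : ∀ i j : Fin n, (P⁻¹ * A * P) i j = ∑ s, f i s * (A *ᵥ (f j)) s := by
    intro i j
    rw [hPinv, Matrix.mul_assoc, Matrix.mul_apply]
    refine Finset.sum_congr rfl fun s _ => ?_
    have h1 : Pᵀ i s = f i s := rfl
    have h2 : (A * P) s j = (A *ᵥ (f j)) s := by
      simp [hP, Matrix.mul_apply, mulVec, dotProduct]
    rw [h1, h2]
  have hentryB : ∀ (i : Fin n) (j : Fin m), (P⁻¹ * B) i j = ∑ s, f i s * B s j := by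
    intro i j
    rw [hPinv, Matrix.mul_apply]
    rfl
  have hfW : ∀ j : Fin n, (j : ℕ) < k → (f j : Fin n → ℝ) ∈ kalSpace A B n :=
    fun j hj => obasis_mem_left hkn W hfr j hj
  -- goal (1)
  have goal1 : (fun x : Fin n → ℝ => P⁻¹.mulVec x) '' R
      = {x : Fin n → ℝ | ∀ i : Fin n, k ≤ (i : ℕ) → x i = 0} := by
    ext y
    constructor
    · rintro ⟨x, hxR, rfl⟩
      intro i hi
      rw [hPinv]
      show (Pᵀ *ᵥ x) i = 0
      rw [hdot]
      refine horth x ?_ i hi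
      rw [hRW] at hxR
      exact hxR
    · intro hy
      refine ⟨P.mulVec y, ?_, ?_⟩
      · rw [hRW]
        have hxy : P.mulVec y = ∑ j : Fin n, y j • (fun s => f j s) := by
          funext i
          simp [hP, mulVec, dotProduct, Finset.sum_apply, mul_comm]
        rw [hxy]
        refine Submodule.sum_mem _ fun j _ => ?_
        by_cases hj : (j : ℕ) < k
        · exact Submodule.smul_mem _ _ (hfW j hj)
        · rw [hy j (le_of_not_gt hj), zero_smul]
          exact Submodule.zero_mem _
      · rw [hPinv]
        show Pᵀ *ᵥ (P *ᵥ y) = y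
        rw [Matrix.mulVec_mulVec, hPTP, Matrix.one_mulVec]
  -- goal (2)
  have h21 : M'.toBlocks₂₁ = 0 := by
    ext b a
    show (P⁻¹ * A * P) (e (Sum.inr b)) (e (Sum.inl a)) = 0
    rw [hentryA]
    refine horth _ ?_ _ (by rw [hval_inr]; omega)
    exact mulVec_mem_kalSpace A B (hfW (e (Sum.inl a)) (by rw [hval_inl]; exact a.2))
  have goal2 : M' = fromBlocks A₁ A₂ 0 A₃ := by
    rw [hA₁, hA₂, hA₃, ← h21, fromBlocks_toBlocks]
  -- goal (3)
  have hBW : ∀ j : Fin m, (fun s => B s j) ∈ kalSpace A B n := by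
    intro j
    have h := single_pow_mem A B n ⟨0, hn⟩ (Pi.single j 1)
    simp [Matrix.mulVec_single_one] at h
    exact h
  have h32 : ((P⁻¹ * B).submatrix e id).toRows₂ = 0 := by
    ext b j
    show (P⁻¹ * B) (e (Sum.inr b)) j = 0
    rw [hentryB]
    exact horth _ (hBW j) _ (by rw [hval_inr]; omega)
  have goal3 : (P⁻¹ * B).submatrix e id = fromRows B₁ 0 := by
    rw [hB₁, ← h32, fromRows_toRows]
  -- goal (4)
  set Abar := P⁻¹ * A * P with hAbar
  set Bbar := P⁻¹ * B with hBbar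
  have hconj : ∀ j : ℕ, Abar ^ j = P⁻¹ * A ^ j * P := by
    intro j
    induction j with
    | zero => rw [pow_zero, pow_zero, Matrix.mul_one, hPinv, hPTP]
    | succ j ih =>
      rw [pow_succ, ih, hAbar, pow_succ]
      have : P * P⁻¹ = 1 := by rw [hPinv]; exact hPPT
      calc P⁻¹ * A ^ j * P * (P⁻¹ * A * P)
          = P⁻¹ * A ^ j * (P * P⁻¹) * A * P := by simp only [Matrix.mul_assoc]
        _ = P⁻¹ * (A ^ j * A) * P := by
            rw [this, Matrix.mul_one]
            simp only [Matrix.mul_assoc]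
  have hABj : ∀ j : ℕ, Abar ^ j * Bbar = P⁻¹ * (A ^ j * B) := by
    intro j
    rw [hconj, hBbar]
    have : P * P⁻¹ = 1 := by rw [hPinv]; exact hPPT
    calc P⁻¹ * A ^ j * P * (P⁻¹ * B) = P⁻¹ * A ^ j * (P * P⁻¹) * B := by
            simp only [Matrix.mul_assoc]
      _ = P⁻¹ * (A ^ j * B) := by
            rw [this, Matrix.mul_one]
            simp only [Matrix.mul_assoc]
  have hKbar : kalmanMatrix Abar Bbar n = P⁻¹ * kalmanMatrix A B n := by
    ext i jl
    rw [show kalmanMatrix Abar Bbar n i jl = (Abar ^ (jl.1 : ℕ) * Bbar) i jl.2 from rfl,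
      hABj, Matrix.mul_apply, Matrix.mul_apply]
    rfl
  have hrankK : (kalmanMatrix A B n).rank = k := by
    rw [show (kalmanMatrix A B n).rank = Module.finrank ℝ (kalSpace A B n) from rfl]
    rw [hk, hspan]
  have hdet : IsUnit P⁻¹.det := by
    rw [hPinv]
    exact IsUnit.of_mul_eq_one P.det (by rw [← Matrix.det_mul, hPTP, Matrix.det_one])
  have hrankKbar : (kalmanMatrix Abar Bbar n).rank = k := by
    rw [hKbar, Matrix.rank_mul_eq_right_of_isUnit_det _ _ hdet, hrankK]
  have hpow : ∀ j : ℕ, ∃ C, (Abar ^ j).submatrix e e = fromBlocks (A₁ ^ j) C 0 (A₃ ^ j) := by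
    intro j
    induction j with
    | zero =>
      refine ⟨0, ?_⟩
      rw [pow_zero, pow_zero, pow_zero, Matrix.submatrix_one_equiv]
      simp [fromBlocks_one]
    | succ j ih =>
      obtain ⟨C, hC⟩ := ih
      refine ⟨A₁ ^ j * A₂ + C * A₃, ?_⟩
      rw [pow_succ, ← Matrix.submatrix_mul_equiv _ _ _ e _, hC]
      rw [show Abar.submatrix ⇑e ⇑e = M' from rfl, goal2, fromBlocks_multiply]
      simp [pow_succ]
  have hprod : ∀ j : ℕ, ((Abar ^ j) * Bbar).submatrix e id = fromRows ((A₁ ^ j) * B₁) 0 := by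
    intro j
    obtain ⟨C, hC⟩ := hpow j
    rw [← Matrix.submatrix_mul_equiv _ _ _ e _, hC,
      show Bbar.submatrix ⇑e id = fromRows B₁ 0 from goal3, fromBlocks_mul_fromRows]
    simp
  have hKA1 : (kalmanMatrix Abar Bbar n).submatrix e id
      = fromRows (kalmanMatrix A₁ B₁ n) 0 := by
    ext i jl
    have h := congrFun (congrFun (hprod (jl.1 : ℕ)) i) jl.2
    cases i with
    | inl a =>
      rw [show ((kalmanMatrix Abar Bbar n).submatrix ⇑e id) (Sum.inl a) jl
          = ((Abar ^ (jl.1 : ℕ) * Bbar).submatrix ⇑e id) (Sum.inl a) jl.2 from rfl, h]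
      rfl
    | inr b =>
      rw [show ((kalmanMatrix Abar Bbar n).submatrix ⇑e id) (Sum.inr b) jl
          = ((Abar ^ (jl.1 : ℕ) * Bbar).submatrix ⇑e id) (Sum.inr b) jl.2 from rfl, h]
      rfl
  have hrankA1n : (kalmanMatrix A₁ B₁ n).rank = k := by
    rw [← aux_rank_fromRows_zero (β := Fin (n - k)) (kalmanMatrix A₁ B₁ n), ← hKA1,
      aux_rank_submatrix_rows, hrankKbar]
  have hkalEq : kalSpace A₁ B₁ k = kalSpace A₁ B₁ n :=
    le_antisymm (kalSpace_mono A₁ B₁ hkn) (kalSpace_le_size A₁ B₁ n)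
  have goal4 : (kalmanMatrix A₁ B₁ k).rank = k := by
    rw [show (kalmanMatrix A₁ B₁ k).rank = Module.finrank ℝ (kalSpace A₁ B₁ k) from rfl, hkalEq,
      show Module.finrank ℝ (kalSpace A₁ B₁ n) = (kalmanMatrix A₁ B₁ n).rank from rfl, hrankA1n]
  exact ⟨A₁, A₂, A₃, B₁, goal1, goal2, goal3, goal4⟩
end

section
/- Dyadic telescoping lemma: Let C > 0 and T > 0. Let (a_j)_{j∈ℕ} be a bounded sequence of nonnegative real numbers and (I_j)_{j∈ℕ} a sequence of nonnegative real numbers such that for every j ∈ ℕ: a_j ≤ C · e^{C·2^j/T} · I_j^{2/3} · a_{j+1}^{1/3}. Then a_0 ≤ (2/(3√3)) · C^{3/2} · e^{3C/T} · Σ_{j=0}^{∞} I_j, where the sum on the right is taken in [0, +∞] (so the conclusion is trivially true when the series diverges). -/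
open Filter Finset Real

/-- **Dyadic telescoping lemma.** If a bounded nonnegative sequence `a` satisfies
`a j ≤ C e^{C 2^j / T} I_j^{2/3} a_{j+1}^{1/3}` for all `j`, then
`a 0 ≤ (2/(3√3)) C^{3/2} e^{3C/T} Σ_j I_j`, the sum being taken in `[0, +∞]`. -/
theorem dyadic_telescoping
    (C T : ℝ) (hC : 0 < C) (hT : 0 < T)
    (a : ℕ → ℝ) (ha_nonneg : ∀ j, 0 ≤ a j) (ha_bdd : ∃ M : ℝ, ∀ j, a j ≤ M)
    (I : ℕ → ℝ) (hI_nonneg : ∀ j, 0 ≤ I j)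
    (hrec : ∀ j : ℕ,
      a j ≤ C * Real.exp (C * 2 ^ j / T) * (I j) ^ ((2:ℝ)/3) * (a (j+1)) ^ ((1:ℝ)/3)) :
    ENNReal.ofReal (a 0)
      ≤ ENNReal.ofReal ((2 / (3 * Real.sqrt 3)) * C ^ ((3:ℝ)/2) * Real.exp (3 * C / T))
          * ∑' j : ℕ, ENNReal.ofReal (I j) := by
  classical
  set K : ℝ := (2 / (3 * Real.sqrt 3)) * C ^ ((3:ℝ)/2) * Real.exp (3 * C / T) with hK
  have hsqrt3 : (0:ℝ) < Real.sqrt 3 := Real.sqrt_pos.mpr (by norm_num)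
  have hKpos : 0 < K := by
    apply mul_pos (mul_pos _ (Real.rpow_pos_of_pos hC _)) (Real.exp_pos _)
    positivity
  by_cases ha0 : a 0 ≤ 0
  · simp [ENNReal.ofReal_eq_zero.mpr ha0]
  push_neg at ha0
  by_cases htop : (∑' j : ℕ, ENNReal.ofReal (I j)) = ⊤
  · rw [htop, ENNReal.mul_top (by simp [ENNReal.ofReal_eq_zero, not_le, hKpos])]
    exact le_top
  set s : ℝ := (∑' j : ℕ, ENNReal.ofReal (I j)).toReal with hs
  have hsum_eq : (∑' j : ℕ, ENNReal.ofReal (I j)) = ENNReal.ofReal s :=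
    (ENNReal.ofReal_toReal htop).symm
  have hpartial : ∀ n, ∑ j ∈ Finset.range n, I j ≤ s := by
    intro n
    have h1 : ENNReal.ofReal (∑ j ∈ Finset.range n, I j)
        = ∑ j ∈ Finset.range n, ENNReal.ofReal (I j) :=
      ENNReal.ofReal_sum_of_nonneg (fun j _ => hI_nonneg j)
    have h2 : (∑ j ∈ Finset.range n, ENNReal.ofReal (I j))
        ≤ ∑' j : ℕ, ENNReal.ofReal (I j) := ENNReal.sum_le_tsum _
    have h3 := ENNReal.toReal_mono htop (h1 ▸ h2)
    rwa [ENNReal.toReal_ofReal (Finset.sum_nonneg fun j _ => hI_nonneg j)] at h3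
  -- positivity of everything
  have hapos : ∀ j, 0 < a j := by
    intro j
    induction j with
    | zero => exact ha0
    | succ n ih =>
      by_contra h
      push_neg at h
      have hz : a (n+1) = 0 := le_antisymm h (ha_nonneg _)
      have := hrec n
      rw [hz, Real.zero_rpow (by norm_num : ((1:ℝ)/3) ≠ 0), mul_zero] at this
      exact absurd this (not_le.mpr ih)
  have hIpos : ∀ j, 0 < I j := by
    intro j
    by_contra h
    push_neg at h
    have hz : I j = 0 := le_antisymm h (hI_nonneg _)
    have := hrec j
    rw [hz, Real.zero_rpow (by norm_num : ((2:ℝ)/3) ≠ 0), mul_zero, zero_mul] at this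
    exact absurd this (not_le.mpr (hapos j))
  have hspos : 0 < s := lt_of_lt_of_le (hIpos 0) (by simpa using hpartial 1)
  obtain ⟨M, hM⟩ := ha_bdd
  -- logarithmic recurrence
  have hlog : ∀ j, Real.log (a j)
      ≤ Real.log C + C * 2 ^ j / T + (2/3) * Real.log (I j)
        + (1/3) * Real.log (a (j+1)) := by
    intro j
    have h := hrec j
    have h1 : Real.log (a j)
        ≤ Real.log (C * Real.exp (C * 2 ^ j / T) * (I j) ^ ((2:ℝ)/3)
            * (a (j+1)) ^ ((1:ℝ)/3)) := Real.log_le_log (hapos j) h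
    rw [Real.log_mul
          (ne_of_gt (mul_pos (mul_pos hC (Real.exp_pos _)) (Real.rpow_pos_of_pos (hIpos j) _)))
          (ne_of_gt (Real.rpow_pos_of_pos (hapos (j+1)) _)),
        Real.log_mul (ne_of_gt (by positivity : (0:ℝ) < C * Real.exp (C * 2 ^ j / T)))
          (ne_of_gt (Real.rpow_pos_of_pos (hIpos j) _)),
        Real.log_mul (ne_of_gt hC) (ne_of_gt (Real.exp_pos _)),
        Real.log_exp, Real.log_rpow (hIpos j), Real.log_rpow (hapos (j+1))] at h1
    linarith
  -- telescoped inequality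
  have htel : ∀ n, Real.log (a 0)
      ≤ (∑ j ∈ Finset.range n,
          (1/3:ℝ)^j * (Real.log C + C * 2 ^ j / T + (2/3) * Real.log (I j)))
        + (1/3:ℝ)^n * Real.log (a n) := by
    intro n
    induction n with
    | zero => simp
    | succ n ih =>
      have h := hlog n
      have hpn : (0:ℝ) ≤ (1/3:ℝ)^n := by positivity
      have h2 : (1/3:ℝ)^n * Real.log (a n)
          ≤ (1/3:ℝ)^n * (Real.log C + C * 2 ^ n / T + (2/3) * Real.log (I n))
            + (1/3:ℝ)^(n+1) * Real.log (a (n+1)) := by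
        have := mul_le_mul_of_nonneg_left h hpn
        calc (1/3:ℝ)^n * Real.log (a n)
            ≤ (1/3:ℝ)^n * (Real.log C + C * 2 ^ n / T + (2/3) * Real.log (I n)
                + (1/3) * Real.log (a (n+1))) := this
          _ = (1/3:ℝ)^n * (Real.log C + C * 2 ^ n / T + (2/3) * Real.log (I n))
                + (1/3:ℝ)^(n+1) * Real.log (a (n+1)) := by ring
      calc Real.log (a 0)
          ≤ (∑ j ∈ Finset.range n,
              (1/3:ℝ)^j * (Real.log C + C * 2 ^ j / T + (2/3) * Real.log (I j)))
            + (1/3:ℝ)^n * Real.log (a n) := ih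
        _ ≤ (∑ j ∈ Finset.range (n+1),
              (1/3:ℝ)^j * (Real.log C + C * 2 ^ j / T + (2/3) * Real.log (I j)))
            + (1/3:ℝ)^(n+1) * Real.log (a (n+1)) := by
            rw [Finset.sum_range_succ]; linarith
  -- weights
  set w : ℕ → ℝ := fun j => (2/3) * (1/3:ℝ)^j with hw
  have hwpos : ∀ j, 0 < w j := by intro j; positivity
  -- splitting the sum
  have hsplit : ∀ n, (∑ j ∈ Finset.range n,
        (1/3:ℝ)^j * (Real.log C + C * 2 ^ j / T + (2/3) * Real.log (I j)))
      = (∑ j ∈ Finset.range n, (1/3:ℝ)^j) * Real.log C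
        + (C/T) * (∑ j ∈ Finset.range n, (2/3:ℝ)^j)
        + ∑ j ∈ Finset.range n, w j * Real.log (I j) := by
    intro n
    rw [Finset.sum_mul, Finset.mul_sum, ← Finset.sum_add_distrib, ← Finset.sum_add_distrib]
    apply Finset.sum_congr rfl
    intro j _
    have h23 : ((2:ℝ)/3)^j = (1/3:ℝ)^j * (2:ℝ)^j := by
      rw [← mul_pow]; norm_num
    rw [h23, hw]
    ring
  -- the AM-GM substitute via log x ≤ x - 1
  have hIlog : ∀ j, w j * Real.log (I j)
      ≤ I j / s - w j + w j * Real.log (w j) + w j * Real.log s := by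
    intro j
    have hwj := hwpos j
    have hkey : Real.log (I j) = Real.log (I j / (w j * s)) + Real.log (w j) + Real.log s := by
      rw [Real.log_div (ne_of_gt (hIpos j)) (by positivity),
          Real.log_mul (ne_of_gt hwj) (ne_of_gt hspos)]
      ring
    have hb : Real.log (I j / (w j * s)) ≤ I j / (w j * s) - 1 :=
      Real.log_le_sub_one_of_pos (div_pos (hIpos j) (mul_pos hwj hspos))
    have hmul := mul_le_mul_of_nonneg_left hb hwj.le
    have heq : w j * (I j / (w j * s)) = I j / s := by
      field_simp
    calc w j * Real.log (I j)
        = w j * Real.log (I j / (w j * s)) + w j * Real.log (w j) + w j * Real.log s := by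
          rw [hkey]; ring
      _ ≤ w j * (I j / (w j * s) - 1) + w j * Real.log (w j) + w j * Real.log s := by
          linarith
      _ = I j / s - w j + w j * Real.log (w j) + w j * Real.log s := by
          rw [mul_sub, heq]; ring
  have hsumw : ∀ n, ∑ j ∈ Finset.range n, w j * Real.log (I j)
      ≤ 1 - (∑ j ∈ Finset.range n, w j) + (∑ j ∈ Finset.range n, w j * Real.log (w j))
        + (∑ j ∈ Finset.range n, w j) * Real.log s := by
    intro n
    have h1 : ∑ j ∈ Finset.range n, w j * Real.log (I j)
        ≤ ∑ j ∈ Finset.range n, (I j / s - w j + w j * Real.log (w j) + w j * Real.log s) :=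
      Finset.sum_le_sum (fun j _ => hIlog j)
    have h2 : ∑ j ∈ Finset.range n, (I j / s - w j + w j * Real.log (w j) + w j * Real.log s)
        = (∑ j ∈ Finset.range n, I j) / s - (∑ j ∈ Finset.range n, w j)
          + (∑ j ∈ Finset.range n, w j * Real.log (w j))
          + (∑ j ∈ Finset.range n, w j) * Real.log s := by
      rw [Finset.sum_div, Finset.sum_mul, ← Finset.sum_sub_distrib,
        ← Finset.sum_add_distrib, ← Finset.sum_add_distrib]
    have h3 : (∑ j ∈ Finset.range n, I j) / s ≤ 1 :=
      (div_le_one hspos).mpr (hpartial n)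
    linarith
  -- combined bound
  have hg : ∀ n, Real.log (a 0)
      ≤ (∑ j ∈ Finset.range n, (1/3:ℝ)^j) * Real.log C
        + (C/T) * (∑ j ∈ Finset.range n, (2/3:ℝ)^j)
        + (1 - ∑ j ∈ Finset.range n, w j)
        + (∑ j ∈ Finset.range n, w j * Real.log (w j))
        + (∑ j ∈ Finset.range n, w j) * Real.log s
        + (1/3:ℝ)^n * Real.log M := by
    intro n
    have h1 := htel n
    rw [hsplit n] at h1
    have h2 : (1/3:ℝ)^n * Real.log (a n) ≤ (1/3:ℝ)^n * Real.log M :=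
      mul_le_mul_of_nonneg_left (Real.log_le_log (hapos n) (hM n)) (by positivity)
    linarith [hsumw n]
  -- limits
  have h13 : HasSum (fun j : ℕ => ((1:ℝ)/3)^j) (3/2) := by
    have := hasSum_geometric_of_lt_one (by norm_num : (0:ℝ) ≤ 1/3) (by norm_num : (1:ℝ)/3 < 1)
    convert this using 1
    norm_num
  have h23 : HasSum (fun j : ℕ => ((2:ℝ)/3)^j) 3 := by
    have := hasSum_geometric_of_lt_one (by norm_num : (0:ℝ) ≤ 2/3) (by norm_num : (2:ℝ)/3 < 1)
    convert this using 1
    norm_num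
  have hWsum : HasSum w 1 := by
    have := h13.mul_left (2/3)
    rw [show (1:ℝ) = 2/3*(3/2) by norm_num]; exact this
  have hjsum : HasSum (fun j : ℕ => (j:ℝ) * ((1:ℝ)/3)^j) (3/4) := by
    have hn : ‖(1:ℝ)/3‖ < 1 := by
      rw [Real.norm_eq_abs, abs_of_pos (by norm_num : (0:ℝ) < 1/3)]
      norm_num
    have := hasSum_coe_mul_geometric_of_norm_lt_one hn
    rw [show (3/4:ℝ) = 1/3/(1-1/3)^2 by norm_num]; exact this
  have hwlogsum : HasSum (fun j => w j * Real.log (w j))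
      (Real.log (2/3) - Real.log 3 / 2) := by
    have heq : ∀ j : ℕ, w j * Real.log (w j)
        = ((2/3) * Real.log (2/3)) * ((1:ℝ)/3)^j
          + (-(2/3) * Real.log 3) * ((j:ℝ) * ((1:ℝ)/3)^j) := by
      intro j
      have hlw : Real.log (w j) = Real.log (2/3) + (j:ℝ) * Real.log (1/3) := by
        rw [hw]
        rw [Real.log_mul (by norm_num) (by positivity), Real.log_pow]
      have hl13 : Real.log ((1:ℝ)/3) = -Real.log 3 := by
        rw [one_div, Real.log_inv]
      rw [hw, hlw, hl13]
      ring
    have h1 := (h13.mul_left ((2/3) * Real.log (2/3)))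
    have h2 := (hjsum.mul_left (-(2/3) * Real.log 3))
    have := h1.add h2
    have hval : Real.log (2/3) - Real.log 3 / 2
        = (2/3 * Real.log (2/3)) * (3/2) + (-(2/3) * Real.log 3) * (3/4) := by ring
    have hf := funext heq
    rw [hf, hval]; exact this
  have t1 : Tendsto (fun n => ∑ j ∈ Finset.range n, ((1:ℝ)/3)^j) atTop (nhds (3/2)) :=
    h13.tendsto_sum_nat
  have t2 : Tendsto (fun n => ∑ j ∈ Finset.range n, ((2:ℝ)/3)^j) atTop (nhds 3) :=
    h23.tendsto_sum_nat
  have tW : Tendsto (fun n => ∑ j ∈ Finset.range n, w j) atTop (nhds 1) :=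
    hWsum.tendsto_sum_nat
  have twlog : Tendsto (fun n => ∑ j ∈ Finset.range n, w j * Real.log (w j)) atTop
      (nhds (Real.log (2/3) - Real.log 3 / 2)) :=
    hwlogsum.tendsto_sum_nat
  have tpow : Tendsto (fun n : ℕ => ((1:ℝ)/3)^n * Real.log M) atTop (nhds 0) := by
    have := (tendsto_pow_atTop_nhds_zero_of_lt_one (by norm_num : (0:ℝ) ≤ 1/3)
      (by norm_num : (1:ℝ)/3 < 1)).mul_const (Real.log M)
    simpa using this
  have tg : Tendsto (fun n =>
      (∑ j ∈ Finset.range n, (1/3:ℝ)^j) * Real.log C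
        + (C/T) * (∑ j ∈ Finset.range n, (2/3:ℝ)^j)
        + (1 - ∑ j ∈ Finset.range n, w j)
        + (∑ j ∈ Finset.range n, w j * Real.log (w j))
        + (∑ j ∈ Finset.range n, w j) * Real.log s
        + (1/3:ℝ)^n * Real.log M) atTop
      (nhds ((3/2) * Real.log C + (C/T) * 3 + (1 - 1)
        + (Real.log (2/3) - Real.log 3 / 2) + 1 * Real.log s + 0)) := by
    exact (((((t1.mul_const _).add (t2.const_mul _)).add
      (tendsto_const_nhds.sub tW)).add twlog).add (tW.mul_const _)).add tpow
  have hL : Real.log (a 0) ≤ (3/2) * Real.log C + (C/T) * 3 + (1 - 1)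
      + (Real.log (2/3) - Real.log 3 / 2) + 1 * Real.log s + 0 :=
    ge_of_tendsto' tg hg
  -- exponentiate
  have hfinal : a 0 ≤ K * s := by
    have h1 : a 0 ≤ Real.exp ((3/2) * Real.log C + (C/T) * 3 + (1 - 1)
        + (Real.log (2/3) - Real.log 3 / 2) + 1 * Real.log s + 0) := by
      calc a 0 = Real.exp (Real.log (a 0)) := (Real.exp_log ha0).symm
        _ ≤ _ := Real.exp_le_exp.mpr hL
    refine h1.trans_eq ?_
    have hL2 : (3/2) * Real.log C + (C/T) * 3 + (1 - 1)
        + (Real.log (2/3) - Real.log 3 / 2) + 1 * Real.log s + 0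
        = (Real.log C * ((3:ℝ)/2)) + (3 * C / T)
          + (Real.log (2/3) - Real.log (Real.sqrt 3)) + Real.log s := by
      rw [Real.log_sqrt (by norm_num : (0:ℝ) ≤ 3)]
      ring
    rw [hL2, Real.exp_add, Real.exp_add, Real.exp_add,
      ← Real.rpow_def_of_pos hC, Real.exp_sub,
      Real.exp_log (by norm_num : (0:ℝ) < 2/3), Real.exp_log hsqrt3,
      Real.exp_log hspos, hK]
    ring
  rw [hsum_eq, ← ENNReal.ofReal_mul hKpos.le]
  exact ENNReal.ofReal_le_ofReal hfinal
end

section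
/- Cayley–Hamilton unique continuation for the output of the matrix exponential: Let n, m be positive integers, A ∈ ℝ^{n×n}, B ∈ ℝ^{n×m}, and v ∈ ℝⁿ. The following three assertions are equivalent: (a) Bᵀ e^{tAᵀ} v = 0 for every t ≥ 0; (b) Bᵀ (Aᵀ)^j v = 0 for every j ∈ {0, 1, …, n−1}; (c) v is orthogonal to the controllable subspace 𝔯 (that is, ⟨v, w⟩ = 0 for every w ∈ 𝔯). -/
open Matrix NormedSpace

namespace OutputVanishingAux

variable {n m : ℕ}

/-- The linear output functional `M ↦ Bᵀ (M u)`. -/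
def outL (B : Matrix (Fin n) (Fin m) ℝ) (u : Fin n → ℝ) :
    Matrix (Fin n) (Fin n) ℝ →ₗ[ℝ] (Fin m → ℝ) where
  toFun M := Bᵀ.mulVec (M.mulVec u)
  map_add' M N := by simp [Matrix.add_mulVec, Matrix.mulVec_add]
  map_smul' c M := by simp [Matrix.smul_mulVec, Matrix.mulVec_smul]

lemma outL_apply (B : Matrix (Fin n) (Fin m) ℝ) (u : Fin n → ℝ)
    (M : Matrix (Fin n) (Fin n) ℝ) : outL B u M = Bᵀ.mulVec (M.mulVec u) := rfl

/-- Every power of `M` lies in the span of the first `n` powers (Cayley–Hamilton). -/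
lemma pow_mem_span (hn : 0 < n) (M : Matrix (Fin n) (Fin n) ℝ) (k : ℕ) :
    M ^ k ∈ Submodule.span ℝ (Set.range fun i : Fin n => M ^ (i : ℕ)) := by
  set W := Submodule.span ℝ (Set.range fun i : Fin n => M ^ (i : ℕ)) with hW
  have hgen : ∀ i : Fin n, M ^ (i : ℕ) ∈ W := fun i => Submodule.subset_span ⟨i, rfl⟩
  have hdeg : M.charpoly.natDegree = n := by
    simpa using M.charpoly_natDegree_eq_dim
  have hCH : M ^ n ∈ W := by
    have h0 := Matrix.aeval_self_charpoly M
    rw [Polynomial.aeval_eq_sum_range, hdeg, Finset.sum_range_succ] at h0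
    have hlead : M.charpoly.coeff n = 1 := by
      have := M.charpoly_monic.coeff_natDegree
      rwa [hdeg] at this
    rw [hlead, one_smul] at h0
    have hMn : M ^ n = -∑ i ∈ Finset.range n, M.charpoly.coeff i • M ^ i :=
      eq_neg_of_add_eq_zero_right h0
    rw [hMn]
    refine W.neg_mem (Submodule.sum_smul_mem W _ fun i hi => ?_)
    exact hgen ⟨i, Finset.mem_range.mp hi⟩
  induction k with
  | zero => exact hgen ⟨0, hn⟩
  | succ k ih =>
    have hmap : Submodule.map (LinearMap.mulLeft ℝ M) W ≤ W := by
      rw [hW, Submodule.map_span]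
      refine Submodule.span_le.2 ?_
      rintro x ⟨y, ⟨i, rfl⟩, rfl⟩
      simp only [LinearMap.mulLeft_apply, ← pow_succ']
      rcases lt_or_eq_of_le (Nat.succ_le_of_lt i.isLt) with h | h
      · exact hgen ⟨(i : ℕ) + 1, h⟩
      · have h' : (i : ℕ) + 1 = n := h
        rw [h']; exact hCH
    have : M ^ (k + 1) = M * M ^ k := pow_succ' M k
    rw [this]
    exact hmap ⟨M ^ k, ih, rfl⟩

/-- From vanishing of the first `n` outputs, vanishing of all of them. -/
lemma outL_pow_zero (hn : 0 < n) (A : Matrix (Fin n) (Fin n) ℝ)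
    (B : Matrix (Fin n) (Fin m) ℝ) (v : Fin n → ℝ)
    (hb : ∀ j : ℕ, j < n → Bᵀ.mulVec ((Aᵀ ^ j).mulVec v) = 0) (k : ℕ) :
    Bᵀ.mulVec ((Aᵀ ^ k).mulVec v) = 0 := by
  have hker : Submodule.span ℝ (Set.range fun i : Fin n => Aᵀ ^ (i : ℕ)) ≤
      LinearMap.ker (outL B v) := by
    refine Submodule.span_le.2 ?_
    rintro x ⟨i, rfl⟩
    exact hb i i.isLt
  exact hker (pow_mem_span hn Aᵀ k)

end OutputVanishingAux

open OutputVanishingAux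

/-- **Cayley–Hamilton unique continuation for the output of the matrix exponential.**
The following are equivalent: (a) `Bᵀ e^{tAᵀ} v = 0` for all `t ≥ 0`;
(b) `Bᵀ (Aᵀ)^j v = 0` for `j = 0, …, n-1`;
(c) `v` is orthogonal to the controllable subspace. -/
theorem output_vanishing_tfae
    (n m : ℕ) (hn : 0 < n) (hm : 0 < m)
    (A : Matrix (Fin n) (Fin n) ℝ) (B : Matrix (Fin n) (Fin m) ℝ)
    (R : Set (Fin n → ℝ))
    (hR : R = {x : Fin n → ℝ | ∃ w : Fin n → (Fin m → ℝ),
      x = ∑ j : Fin n, (A ^ (j : ℕ) * B).mulVec (w j)})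
    (v : Fin n → ℝ) :
    ((∀ t : ℝ, 0 ≤ t → Bᵀ.mulVec ((exp (t • Aᵀ)).mulVec v) = 0) ↔
      (∀ j : ℕ, j < n → Bᵀ.mulVec ((Aᵀ ^ j).mulVec v) = 0)) ∧
    ((∀ j : ℕ, j < n → Bᵀ.mulVec ((Aᵀ ^ j).mulVec v) = 0) ↔
      (∀ w ∈ R, ∑ i : Fin n, v i * w i = 0)) := by
  letI : SeminormedRing (Matrix (Fin n) (Fin n) ℝ) := Matrix.linftyOpSemiNormedRing
  letI : NormedRing (Matrix (Fin n) (Fin n) ℝ) := Matrix.linftyOpNormedRing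
  letI : NormedAlgebra ℝ (Matrix (Fin n) (Fin n) ℝ) := Matrix.linftyOpNormedAlgebra
  -- the output functional, as a continuous linear map
  let Lc : (Fin n → ℝ) → (Matrix (Fin n) (Fin n) ℝ →L[ℝ] (Fin m → ℝ)) := fun u =>
    { toLinearMap := outL B u
      cont := (outL B u).continuous_of_finiteDimensional }
  have hLc : ∀ (u : Fin n → ℝ) (M : Matrix (Fin n) (Fin n) ℝ),
      Lc u M = Bᵀ.mulVec (M.mulVec u) := fun u M => rfl
  constructor
  · constructor
    · -- (a) → (b)
      intro ha
      -- by induction, `Bᵀ e^{tAᵀ} (Aᵀ)^j v = 0` for all `t ≥ 0`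
      have key : ∀ j : ℕ, ∀ t : ℝ, 0 ≤ t →
          Bᵀ.mulVec ((exp (t • Aᵀ)).mulVec ((Aᵀ ^ j).mulVec v)) = 0 := by
        intro j
        induction j with
        | zero => simpa using ha
        | succ j ih =>
          -- the function `s ↦ Lc u (exp (s • Aᵀ))` with `u = (Aᵀ)^j v`
          set u : Fin n → ℝ := (Aᵀ ^ j).mulVec v with hu
          have hder : ∀ t : ℝ, HasDerivAt (fun s : ℝ => Lc u (exp (s • Aᵀ)))
              (Lc u (exp (t • Aᵀ) * Aᵀ)) t := fun t =>
            ((Lc u).hasFDerivAt.comp_hasDerivAt t (hasDerivAt_exp_smul_const Aᵀ t))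
          have hzero : ∀ t : ℝ, 0 < t → Lc u (exp (t • Aᵀ) * Aᵀ) = 0 := by
            intro t ht
            have hev : (fun s : ℝ => Lc u (exp (s • Aᵀ))) =ᶠ[nhds t] fun _ => 0 := by
              filter_upwards [Ioi_mem_nhds (show (0:ℝ) < t from ht)] with s hs
              rw [hLc]
              exact ih s (le_of_lt hs)
            have h0 : HasDerivAt (fun s : ℝ => Lc u (exp (s • Aᵀ))) 0 t :=
              (hasDerivAt_const t (0 : Fin m → ℝ)).congr_of_eventuallyEq hev
            exact (hder t).unique h0
          -- rewrite and extend to `t = 0` by continuity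
          have hzero' : ∀ t : ℝ, 0 < t →
              Bᵀ.mulVec ((exp (t • Aᵀ)).mulVec ((Aᵀ ^ (j+1)).mulVec v)) = 0 := by
            intro t ht
            have := hzero t ht
            rw [hLc] at this
            rw [show (Aᵀ ^ (j+1)).mulVec v = Aᵀ.mulVec u by
              rw [hu, Matrix.mulVec_mulVec, ← pow_succ']]
            simp only [Matrix.mulVec_mulVec] at this ⊢
            simpa [Matrix.mul_assoc] using this
          intro t ht
          rcases eq_or_lt_of_le ht with h | h
          · -- continuity at `t = 0`
            set u' : Fin n → ℝ := (Aᵀ ^ (j+1)).mulVec v with hu'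
            have hcont : Continuous fun s : ℝ => Lc u' (exp (s • Aᵀ)) :=
              (Lc u').continuous.comp (continuous_iff_continuousAt.2 fun s => (hasDerivAt_exp_smul_const Aᵀ s).continuousAt)
            have h1 : Filter.Tendsto (fun s : ℝ => Lc u' (exp (s • Aᵀ)))
                (nhdsWithin 0 (Set.Ioi 0)) (nhds (Lc u' (exp ((0:ℝ) • Aᵀ)))) :=
              (hcont.tendsto 0).mono_left nhdsWithin_le_nhds
            have h2 : Filter.Tendsto (fun s : ℝ => Lc u' (exp (s • Aᵀ)))
                (nhdsWithin 0 (Set.Ioi 0)) (nhds 0) := by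
              refine Filter.Tendsto.congr' ?_ tendsto_const_nhds
              filter_upwards [self_mem_nhdsWithin] with s hs
              exact ((hLc u' _).trans (hzero' s hs)).symm
            have := tendsto_nhds_unique h1 h2
            rw [← h, ← hLc]
            exact this
          · exact hzero' t h
      intro j hj
      have := key j 0 le_rfl
      simpa using this
    · -- (b) → (a)
      intro hb t ht
      have hall : ∀ k : ℕ, Bᵀ.mulVec ((Aᵀ ^ k).mulVec v) = 0 :=
        outL_pow_zero hn A B v hb
      have hsum : Summable fun k : ℕ => ((k.factorial : ℝ)⁻¹ : ℝ) • (t • Aᵀ) ^ k :=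
        expSeries_summable' (𝕂 := ℝ) (t • Aᵀ)
      have : Bᵀ.mulVec ((exp (t • Aᵀ)).mulVec v) = Lc v (exp (t • Aᵀ)) := rfl
      rw [this, exp_eq_tsum ℝ, (Lc v).map_tsum hsum]
      have hterm : ∀ k : ℕ, Lc v (((k.factorial : ℝ)⁻¹ : ℝ) • (t • Aᵀ) ^ k) = 0 := by
        intro k
        rw [(Lc v).map_smul, smul_pow, (Lc v).map_smul, hLc, hall k]
        simp
      simp only [hterm]
      exact tsum_zero
  · -- (b) ↔ (c)
    constructor
    · intro hb w hw
      rw [hR] at hw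
      obtain ⟨c, rfl⟩ := hw
      have : ∀ i : Fin n, v ⬝ᵥ (A ^ (i : ℕ) * B).mulVec (c i) = 0 := by
        intro i
        rw [Matrix.dotProduct_mulVec, ← Matrix.mulVec_transpose, Matrix.transpose_mul,
          Matrix.transpose_pow, ← Matrix.mulVec_mulVec, hb i i.isLt]
        simp
      calc ∑ k : Fin n, v k * (∑ i : Fin n, (A ^ (i : ℕ) * B).mulVec (c i)) k
          = v ⬝ᵥ ∑ i : Fin n, (A ^ (i : ℕ) * B).mulVec (c i) := rfl
        _ = ∑ i : Fin n, v ⬝ᵥ (A ^ (i : ℕ) * B).mulVec (c i) := by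
            simp only [dotProduct, Finset.sum_apply, Finset.mul_sum]
            exact Finset.sum_comm
        _ = 0 := by simp [this]
    · intro hc j hj
      funext k
      set j' : Fin n := ⟨j, hj⟩ with hj'
      have hw : (A ^ j * B).mulVec (Pi.single k 1) ∈ R := by
        rw [hR]
        refine ⟨Pi.single j' (Pi.single k 1), ?_⟩
        rw [Finset.sum_eq_single j']
        · simp [hj']
        · intro i _ hi
          rw [Pi.single_eq_of_ne hi]
          simp
        · simp
      have h0 := hc _ hw
      have : (v ⬝ᵥ (A ^ j * B).mulVec (Pi.single k 1)) = 0 := h0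
      rw [Matrix.dotProduct_mulVec, ← Matrix.mulVec_transpose, Matrix.transpose_mul,
        Matrix.transpose_pow, ← Matrix.mulVec_mulVec, dotProduct_single,
        mul_one] at this
      simpa using this
end

section
/- Leading-order factorization of the output near a zero: Let n, m be positive integers, A ∈ ℝ^{n×n}, B ∈ ℝ^{n×m}, and let w ∈ ℝⁿ be such that Bᵀ (Aᵀ)^j w ≠ 0 for some j ∈ ℕ. Let p := min{ j ∈ ℕ : Bᵀ (Aᵀ)^j w ≠ 0 } and a := (1/p!)·Bᵀ (Aᵀ)^p w. Then p ≤ n − 1, a ≠ 0, and there exists a continuous function b : ℝ → ℝᵐ with sup_{|s| ≤ 1} ‖b(s)‖ < ∞ such that for every s ∈ ℝ: Bᵀ e^{sAᵀ} w = s^p · ( a + s·b(s) ). -/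
set_option maxHeartbeats 1000000

open Matrix NormedSpace

/-- The Euclidean norm of a finite real vector. -/
noncomputable def euclNorm {ι : Type*} [Fintype ι] (x : ι → ℝ) : ℝ :=
  Real.sqrt (∑ i, x i ^ 2)

lemma euclNorm_continuous {ι : Type*} [Fintype ι] : Continuous (euclNorm (ι := ι)) := by
  unfold euclNorm
  exact Real.continuous_sqrt.comp (continuous_finset_sum _ fun i _ => (continuous_apply i).pow 2)

/-- The linear map `X ↦ B'.mulVec (X.mulVec w)`. -/
noncomputable def outLM {n m : ℕ} (B' : Matrix (Fin m) (Fin n) ℝ) (w : Fin n → ℝ) :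
    Matrix (Fin n) (Fin n) ℝ →ₗ[ℝ] (Fin m → ℝ) where
  toFun X := B'.mulVec (X.mulVec w)
  map_add' X Y := by simp [Matrix.add_mulVec, Matrix.mulVec_add]
  map_smul' c X := by simp [Matrix.smul_mulVec, Matrix.mulVec_smul]

/-- A Cayley–Hamilton consequence: a linear functional vanishing on the first `n`
powers of an `n × n` matrix vanishes on all powers. -/
lemma vanish_all {n : ℕ} {V : Type*} [AddCommGroup V] [Module ℝ V]
    (M : Matrix (Fin n) (Fin n) ℝ) (φ : Matrix (Fin n) (Fin n) ℝ →ₗ[ℝ] V)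
    (h : ∀ j, j < n → φ (M ^ j) = 0) : ∀ j, φ (M ^ j) = 0 := by
  intro j
  induction j using Nat.strong_induction_on with
  | _ j ih =>
    rcases lt_or_ge j n with hj | hj
    · exact h j hj
    · have hchar : Polynomial.aeval M M.charpoly = 0 := Matrix.aeval_self_charpoly M
      have hdeg : M.charpoly.natDegree = n := by
        simp [M.charpoly_natDegree_eq_dim]
      have hmon : M.charpoly.Monic := Matrix.charpoly_monic M
      have hcn : M.charpoly.coeff n = 1 := by
        have := hmon.coeff_natDegree; rwa [hdeg] at this
      have hexp : M ^ n = -∑ i ∈ Finset.range n, M.charpoly.coeff i • M ^ i := by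
        have h0 := Polynomial.aeval_eq_sum_range (p := M.charpoly) M
        rw [hchar, hdeg, Finset.sum_range_succ, hcn, one_smul] at h0
        linear_combination (norm := module) -h0
      have hjj : M ^ j = -∑ i ∈ Finset.range n, M.charpoly.coeff i • M ^ (j - n + i) := by
        have h1 : M ^ j = M ^ (j - n) * M ^ n := by
          rw [← pow_add]; congr 1; omega
        rw [h1, hexp, mul_neg, Finset.mul_sum]
        congr 1
        refine Finset.sum_congr rfl fun i _ => ?_
        rw [mul_smul_comm, ← pow_add]
      rw [hjj, map_neg, map_sum, neg_eq_zero]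
      refine Finset.sum_eq_zero fun i hi => ?_
      rw [LinearMap.map_smul, ih (j - n + i) (by simp at hi; omega), smul_zero]

section MatrixNorm

attribute [local instance] Matrix.linftyOpNormedRing Matrix.linftyOpNormedAlgebra

/-- Series representation of the output of the matrix exponential. -/
lemma exp_series_repr {n m : ℕ} (M : Matrix (Fin n) (Fin n) ℝ)
    (B' : Matrix (Fin m) (Fin n) ℝ) (w : Fin n → ℝ) (s : ℝ) :
    B'.mulVec ((exp (s • M)).mulVec w)
      = ∑' k : ℕ, ((k.factorial : ℝ)⁻¹ * s ^ k) • B'.mulVec ((M ^ k).mulVec w) := by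
  set φ := outLM B' w with hφ
  set L : Matrix (Fin n) (Fin n) ℝ →L[ℝ] (Fin m → ℝ) := LinearMap.toContinuousLinearMap φ
    with hL
  have hMsum : Summable fun k : ℕ => ((k.factorial : ℝ)⁻¹ * s ^ k) • M ^ k := by
    have := NormedSpace.expSeries_summable' (𝕂 := ℝ) (s • M)
    apply this.congr
    intro k
    rw [smul_pow, smul_smul, mul_comm]
  have h1 : exp (s • M) = ∑' k : ℕ, ((k.factorial : ℝ)⁻¹ * s ^ k) • M ^ k := by
    rw [exp_eq_tsum ℝ]
    exact tsum_congr fun k => by rw [smul_pow, smul_smul, mul_comm]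
  have h2 := L.map_tsum hMsum
  calc B'.mulVec ((exp (s • M)).mulVec w) = L (exp (s • M)) := rfl
    _ = ∑' k : ℕ, L (((k.factorial : ℝ)⁻¹ * s ^ k) • M ^ k) := by rw [h1, h2]
    _ = ∑' k : ℕ, ((k.factorial : ℝ)⁻¹ * s ^ k) • B'.mulVec ((M ^ k).mulVec w) :=
        tsum_congr fun k => by rw [L.map_smul]; rfl

/-- Exponential growth bound for the coefficient vectors. -/
lemma v_growth {n m : ℕ} (M : Matrix (Fin n) (Fin n) ℝ)
    (B' : Matrix (Fin m) (Fin n) ℝ) (w : Fin n → ℝ) :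
    ∃ C K : ℝ, 0 ≤ C ∧ 1 ≤ K ∧
      ∀ k, ‖B'.mulVec ((M ^ k).mulVec w)‖ ≤ C * K ^ k := by
  set φ := outLM B' w with hφ
  letI : TopologicalSpace (Matrix (Fin n) (Fin n) ℝ) := PseudoMetricSpace.toUniformSpace.toTopologicalSpace
  set L : Matrix (Fin n) (Fin n) ℝ →L[ℝ] (Fin m → ℝ) := LinearMap.toContinuousLinearMap φ
    with hL
  set v : ℕ → (Fin m → ℝ) := fun k => B'.mulVec ((M ^ k).mulVec w) with hv
  refine ⟨max ‖v 0‖ ‖L‖, max 1 ‖M‖, le_max_of_le_left (norm_nonneg _), le_max_left _ _, ?_⟩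
  intro k
  rcases Nat.eq_zero_or_pos k with rfl | hk
  · have h0 : B'.mulVec ((M ^ 0).mulVec w) = v 0 := rfl
    rw [h0]
    simpa using le_max_left ‖v 0‖ ‖L‖
  · have h1 : ‖v k‖ ≤ ‖L‖ * ‖M ^ k‖ := L.le_opNorm (M ^ k)
    have h2 : ‖M ^ k‖ ≤ ‖M‖ ^ k := norm_pow_le' M hk
    have h3 : ‖M‖ ^ k ≤ (max 1 ‖M‖) ^ k :=
      pow_le_pow_left₀ (norm_nonneg M) (le_max_right _ _) k
    calc ‖v k‖ ≤ ‖L‖ * ‖M‖ ^ k :=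
          le_trans h1 (mul_le_mul_of_nonneg_left h2 (norm_nonneg L))
      _ ≤ max ‖v 0‖ ‖L‖ * (max 1 ‖M‖) ^ k :=
          mul_le_mul (le_max_right _ _) h3 (by positivity) (le_max_of_le_left (norm_nonneg _))

end MatrixNorm

/-- **Leading-order factorization of the output near a zero.**
Let `p` be the least `j` with `Bᵀ (Aᵀ)^j w ≠ 0` and `a := (1/p!)·Bᵀ (Aᵀ)^p w`.
Then `p ≤ n-1`, `a ≠ 0`, and `Bᵀ e^{sAᵀ} w = s^p (a + s·b(s))` for a continuous,
locally bounded function `b`. -/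
theorem leading_order_factorization
    (n m : ℕ) (hn : 0 < n) (hm : 0 < m)
    (A : Matrix (Fin n) (Fin n) ℝ) (B : Matrix (Fin n) (Fin m) ℝ)
    (w : Fin n → ℝ) (hw : ∃ j : ℕ, Bᵀ.mulVec ((Aᵀ ^ j).mulVec w) ≠ 0)
    (p : ℕ) (hp : p = sInf {j : ℕ | Bᵀ.mulVec ((Aᵀ ^ j).mulVec w) ≠ 0})
    (a : Fin m → ℝ)
    (ha : a = ((1 : ℝ) / (Nat.factorial p : ℝ)) • Bᵀ.mulVec ((Aᵀ ^ p).mulVec w)) :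
    p ≤ n - 1 ∧ a ≠ 0 ∧
    ∃ b : ℝ → (Fin m → ℝ), Continuous b ∧
      (∃ Cb : ℝ, ∀ s : ℝ, |s| ≤ 1 → euclNorm (b s) ≤ Cb) ∧
      ∀ s : ℝ, Bᵀ.mulVec ((exp (s • Aᵀ)).mulVec w) = s ^ p • (a + s • b s) := by
  set M := Aᵀ with hM
  set v : ℕ → (Fin m → ℝ) := fun k => Bᵀ.mulVec ((M ^ k).mulVec w) with hv
  have hexp : ∀ s : ℝ, Bᵀ.mulVec ((exp (s • M)).mulVec w)
      = ∑' k : ℕ, ((k.factorial : ℝ)⁻¹ * s ^ k) • v k := fun s => exp_series_repr M Bᵀ w s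
  obtain ⟨C, K, hC, hK1, hbound⟩ := v_growth M Bᵀ w
  have hK0 : (0:ℝ) ≤ K := le_trans zero_le_one hK1
  -- facts about p
  have hSne : {j : ℕ | Bᵀ.mulVec ((M ^ j).mulVec w) ≠ 0}.Nonempty := hw
  have hpmem : v p ≠ 0 := by rw [hv, hp]; exact Nat.sInf_mem hSne
  have hvlt : ∀ j, j < p → v j = 0 := by
    intro j hj
    rw [hp] at hj
    have := Nat.notMem_of_lt_sInf hj
    simpa only [Set.mem_setOf_eq, not_not] using this
  -- define b
  set b : ℝ → (Fin m → ℝ) :=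
    fun s => ∑' k : ℕ, (((k + p + 1).factorial : ℝ)⁻¹ * s ^ k) • v (k + p + 1) with hb
  -- term bound
  have hterm_bound : ∀ (R : ℝ), ∀ (k : ℕ) (s : ℝ), |s| ≤ R →
      ‖(((k + p + 1).factorial : ℝ)⁻¹ * s ^ k) • v (k + p + 1)‖
        ≤ (C * K ^ (p + 1)) * ((R * K) ^ k / k.factorial) := by
    intro R k s hs
    have hR : 0 ≤ R := le_trans (abs_nonneg s) hs
    rw [norm_smul]
    have hf : (k.factorial : ℝ) ≤ ((k + p + 1).factorial : ℝ) := by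
      exact_mod_cast Nat.factorial_le (by omega)
    have hf0 : (0:ℝ) < (k.factorial : ℝ) := by exact_mod_cast k.factorial_pos
    have h1 : ‖((k + p + 1).factorial : ℝ)⁻¹ * s ^ k‖ ≤ (k.factorial : ℝ)⁻¹ * R ^ k := by
      rw [norm_mul, norm_inv, Real.norm_natCast, norm_pow, Real.norm_eq_abs]
      exact mul_le_mul (inv_anti₀ hf0 hf)
        (pow_le_pow_left₀ (abs_nonneg s) hs k) (by positivity) (by positivity)
    have h2 : ‖v (k + p + 1)‖ ≤ C * K ^ (k + p + 1) := hbound _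
    calc ‖((k + p + 1).factorial : ℝ)⁻¹ * s ^ k‖ * ‖v (k + p + 1)‖
        ≤ ((k.factorial : ℝ)⁻¹ * R ^ k) * (C * K ^ (k + p + 1)) :=
          mul_le_mul h1 h2 (norm_nonneg _) (by positivity)
      _ = (C * K ^ (p + 1)) * ((R * K) ^ k / k.factorial) := by
          rw [show k + p + 1 = k + (p + 1) from rfl, pow_add, mul_pow, div_eq_mul_inv]
          ring
  have hsum_u : ∀ R : ℝ, Summable fun k : ℕ =>
      (C * K ^ (p + 1)) * ((R * K) ^ k / k.factorial) :=
    fun R => (Real.summable_pow_div_factorial (R * K)).mul_left _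
  have hbsum : ∀ s : ℝ, Summable fun k : ℕ =>
      (((k + p + 1).factorial : ℝ)⁻¹ * s ^ k) • v (k + p + 1) := by
    intro s
    exact Summable.of_norm_bounded (hsum_u |s|) fun k => hterm_bound |s| k s le_rfl
  -- continuity of b
  have hbcont : Continuous b := by
    rw [continuous_iff_continuousAt]
    intro s₀
    have hmem : s₀ ∈ Metric.ball (0:ℝ) (|s₀| + 1) := by
      rw [Metric.mem_ball, Real.dist_eq, sub_zero]
      linarith [abs_nonneg s₀]
    have hu := hsum_u (|s₀| + 1)
    have hb' : ∀ (k : ℕ) (s : ℝ), s ∈ Metric.ball (0:ℝ) (|s₀| + 1) →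
        ‖(((k + p + 1).factorial : ℝ)⁻¹ * s ^ k) • v (k + p + 1)‖
          ≤ (C * K ^ (p + 1)) * (((|s₀| + 1) * K) ^ k / k.factorial) := by
      intro k s hs
      apply hterm_bound _ k s
      have : dist s 0 < |s₀| + 1 := hs
      rw [Real.dist_eq, sub_zero] at this
      linarith
    have hco := continuousOn_tsum
      (fun k => ((continuous_const.mul (continuous_pow k)).smul continuous_const).continuousOn)
      hu hb'
    rw [hb]
    exact hco.continuousAt (Metric.isOpen_ball.mem_nhds hmem)
  -- p ≤ n - 1
  have hple : p ≤ n - 1 := by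
    by_contra hcon
    push_neg at hcon
    have hzero : ∀ j, j < n → (outLM Bᵀ w) (M ^ j) = 0 := fun j hj => hvlt j (by omega)
    obtain ⟨j, hj⟩ := hw
    exact hj (vanish_all M (outLM Bᵀ w) hzero j)
  -- a ≠ 0
  have hane : a ≠ 0 := by
    rw [ha]
    refine smul_ne_zero ?_ hpmem
    have := p.factorial_pos
    positivity
  -- Cb
  obtain ⟨s₁, -, hs₁⟩ := (isCompact_Icc (a := (-1:ℝ)) (b := 1)).exists_isMaxOn
    ⟨0, by norm_num⟩ ((euclNorm_continuous.comp hbcont).continuousOn)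
  refine ⟨hple, hane, b, hbcont, ⟨euclNorm (b s₁), fun s hs => hs₁ (abs_le.mp hs)⟩, ?_⟩
  -- the identity
  intro s
  have hvsum : Summable fun k : ℕ => ((k.factorial : ℝ)⁻¹ * s ^ k) • v k := by
    apply Summable.of_norm_bounded ((Real.summable_pow_div_factorial (|s| * K)).mul_left C)
    intro k
    rw [norm_smul, norm_mul, norm_inv, Real.norm_natCast, norm_pow, Real.norm_eq_abs]
    calc (k.factorial : ℝ)⁻¹ * |s| ^ k * ‖v k‖
        ≤ (k.factorial : ℝ)⁻¹ * |s| ^ k * (C * K ^ k) := by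
          apply mul_le_mul_of_nonneg_left (hbound k) (by positivity)
      _ = C * ((|s| * K) ^ k / k.factorial) := by rw [mul_pow, div_eq_mul_inv]; ring
  have hsplit := Summable.sum_add_tsum_nat_add
    (f := fun k : ℕ => ((k.factorial : ℝ)⁻¹ * s ^ k) • v k) (p + 1) hvsum
  have hfin : ∑ i ∈ Finset.range (p + 1), ((i.factorial : ℝ)⁻¹ * s ^ i) • v i
      = s ^ p • a := by
    rw [Finset.sum_range_succ]
    rw [Finset.sum_eq_zero fun i hi => by
      rw [hvlt i (Finset.mem_range.mp hi), smul_zero]]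
    rw [zero_add, ha, hv, smul_smul]
    congr 1
    rw [one_div]
    ring
  have htail : ∑' k : ℕ, (((k + (p + 1)).factorial : ℝ)⁻¹ * s ^ (k + (p + 1))) • v (k + (p + 1))
      = s ^ (p + 1) • b s := by
    rw [hb, ← Summable.tsum_const_smul _ (hbsum s)]
    refine tsum_congr fun k => ?_
    rw [smul_smul]
    congr 1
    rw [show k + (p + 1) = k + p + 1 from rfl, pow_add]
    ring
  calc Bᵀ.mulVec ((exp (s • M)).mulVec w)
      = ∑' k : ℕ, ((k.factorial : ℝ)⁻¹ * s ^ k) • v k := hexp s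
    _ = s ^ p • a + s ^ (p + 1) • b s := by rw [← hsplit, hfin, htail]
    _ = s ^ p • (a + s • b s) := by
        rw [smul_add, smul_smul, ← pow_succ]
end
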